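/- Splitting lower bound: Let p ∈ [0,1]^k be a pseudo-distribution and let q be a pseudo-distribution obtained by splitting each entry p(i) into entries q(i,j) with Σ_j q(i,j) = p(i). If q(i,j) ≤ p(i)/γ for every i,j and some γ ≥ 1, then H(q) ≥ H(p) + ‖p‖·log(γ), where ‖p‖ = Σ_i p(i). -/
import Mathlib


/-- Entropy of a single value, `H(u) = -u * log u` (natural logarithm). -/
noncomputable def Hf (u : ℝ) : ℝ := -u * Real.log u

/-- Splitting lower bound: if a pseudo-distribution `q` is obtained from a
pseudo-distribution `p` by splitting each entry `p i` into entries `q i j`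
(with `∑ j, q i j = p i`) such that every split entry is at most `p i / γ` for
some `γ ≥ 1`, then `H(q) ≥ H(p) + ‖p‖ * log γ`. -/
theorem splitting_lower_bound (k : ℕ) (p : Fin k → ℝ) (m : Fin k → ℕ)
    (q : (i : Fin k) → Fin (m i) → ℝ) (γ : ℝ) (hγ : 1 ≤ γ)
    (hp0 : ∀ i, 0 ≤ p i) (hp1 : ∀ i, p i ≤ 1)
    (hq0 : ∀ i j, 0 ≤ q i j) (hq1 : ∀ i j, q i j ≤ 1)
    (hsplit : ∀ i, ∑ j, q i j = p i)
    (hbound : ∀ i j, q i j ≤ p i / γ) :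
    (∑ i, Hf (p i)) + (∑ i, p i) * Real.log γ ≤ ∑ i, ∑ j, Hf (q i j) := by
  rw [Finset.sum_mul, ← Finset.sum_add_distrib]
  apply Finset.sum_le_sum
  intro i _
  have key : ∀ j, q i j * (Real.log γ - Real.log (p i)) ≤ Hf (q i j) := by
    intro j
    rcases eq_or_lt_of_le (hq0 i j) with h0 | h0
    · simp [Hf, ← h0]
    · have hγ0 : (0:ℝ) < γ := lt_of_lt_of_le one_pos hγ
      have hpγ : 0 < p i / γ := lt_of_lt_of_le h0 (hbound i j)
      have hpi : 0 < p i := by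
        have := mul_pos hpγ hγ0
        rwa [div_mul_cancel₀ _ hγ0.ne'] at this
      have hlog : Real.log (q i j) ≤ Real.log (p i) - Real.log γ := by
        calc Real.log (q i j) ≤ Real.log (p i / γ) :=
              Real.log_le_log h0 (hbound i j)
          _ = Real.log (p i) - Real.log γ := Real.log_div hpi.ne' hγ0.ne'
      have := mul_le_mul_of_nonneg_left hlog (hq0 i j)
      simp only [Hf]
      nlinarith
  calc Hf (p i) + p i * Real.log γ
      = ∑ j, q i j * (Real.log γ - Real.log (p i)) := by
        rw [← Finset.sum_mul, hsplit i, Hf]; ring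
    _ ≤ ∑ j, Hf (q i j) := Finset.sum_le_sum fun j _ => key j
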